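/- Fix y ∈ ℝ, ε > 0 and ν > 0, and define Ψ₀(m) = ∫ 2·max(0, |y − η| − ε) φ(η; m, ν²) dη. Then for every m ∈ ℝ, the derivative of Ψ₀ with respect to m equals 2[ 1 − Φ(y + ε; m, ν²) − Φ(y − ε; m, ν²) ]. -/

import Mathlib

open MeasureTheory Real Filter

/-- Gaussian density with mean `m` and variance `ν ^ 2`, evaluated at `x`:
`φ(x; m, ν²) = (2πν²)^{-1/2} exp(−(x−m)²/(2ν²))`. -/
noncomputable def gpdf (m ν x : ℝ) : ℝ :=
  (Real.sqrt (2 * Real.pi * ν ^ 2))⁻¹ * Real.exp (-((x - m) ^ 2) / (2 * ν ^ 2))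

/-- Gaussian cumulative distribution function with mean `m` and variance `ν ^ 2`:
`Φ(c; m, ν²) = ∫_{−∞}^{c} φ(η; m, ν²) dη`. -/
noncomputable def gcdf (m ν c : ℝ) : ℝ := ∫ x in Set.Iio c, gpdf m ν x

namespace SvrAux

lemma gpdf_nonneg (m ν x : ℝ) : 0 ≤ gpdf m ν x :=
  mul_nonneg (inv_nonneg.2 (Real.sqrt_nonneg _)) (Real.exp_nonneg _)

lemma gpdf_shift (m ν x : ℝ) : gpdf m ν x = gpdf 0 ν (x - m) := by
  simp [gpdf]

lemma gpdf_eq_gaussian (m ν : ℝ) :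
    gpdf m ν = ProbabilityTheory.gaussianPDFReal m ⟨ν ^ 2, sq_nonneg ν⟩ := rfl

lemma integrable_gpdf (m ν : ℝ) : Integrable (gpdf m ν) := by
  rw [gpdf_eq_gaussian]
  exact ProbabilityTheory.integrable_gaussianPDFReal _ _

lemma integral_gpdf (m ν : ℝ) (hν : 0 < ν) : ∫ x, gpdf m ν x = 1 := by
  rw [gpdf_eq_gaussian]
  refine ProbabilityTheory.integral_gaussianPDFReal_eq_one m ?_
  intro h
  have h2 : (ν : ℝ) ^ 2 = 0 := congrArg NNReal.toReal h
  nlinarith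

lemma continuous_gpdf (m ν : ℝ) : Continuous (gpdf m ν) := by
  unfold gpdf
  fun_prop

lemma integrable_abs_mul_gpdf (ν : ℝ) (hν : 0 < ν) :
    Integrable (fun t : ℝ => |t| * gpdf 0 ν t) := by
  have hb : (0:ℝ) < (2 * ν ^ 2)⁻¹ := by positivity
  have h1 : Integrable (fun t : ℝ => |t * Real.exp (-(2 * ν ^ 2)⁻¹ * t ^ 2)|) :=
    (integrable_mul_exp_neg_mul_sq hb).abs
  have h2 : Integrable (fun t : ℝ => |t| * Real.exp (-(2 * ν ^ 2)⁻¹ * t ^ 2)) := by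
    refine h1.congr (Eventually.of_forall fun t => ?_)
    simp only
    rw [abs_mul, abs_of_pos (Real.exp_pos _)]
  have h3 := h2.const_mul ((Real.sqrt (2 * Real.pi * ν ^ 2))⁻¹)
  refine h3.congr (Eventually.of_forall fun t => ?_)
  simp only [gpdf, sub_zero]
  rw [show -t ^ 2 / (2 * ν ^ 2) = -(2 * ν ^ 2)⁻¹ * t ^ 2 by ring]
  ring

lemma loss_lip (y ε a b : ℝ) :
    |2 * max 0 (|y - a| - ε) - 2 * max 0 (|y - b| - ε)| ≤ 2 * |a - b| := by
  have h1 : |max 0 (|y - a| - ε) - max 0 (|y - b| - ε)|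
      ≤ abs ((|y - a| - ε) - (|y - b| - ε)) := by
    rw [max_comm 0 (|y - a| - ε), max_comm 0 (|y - b| - ε)]
    exact abs_max_sub_max_le_abs _ _ _
  have h2 : ((|y - a| - ε) - (|y - b| - ε)) = |y - a| - |y - b| := by ring
  have h3 : abs (|y - a| - |y - b|) ≤ |(y - a) - (y - b)| := abs_abs_sub_abs_le_abs_sub _ _
  have h4 : (y - a) - (y - b) = -(a - b) := by ring
  rw [← mul_sub, abs_mul, abs_two]
  rw [h2] at h1
  rw [h4, abs_neg] at h3
  nlinarith [abs_nonneg (max 0 (|y - a| - ε) - max 0 (|y - b| - ε))]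

/-- Pointwise derivative of the ε-insensitive loss away from the kinks. -/
lemma loss_hasDerivAt {y ε : ℝ} (hε : 0 < ε) {x₀ : ℝ} (h1 : x₀ ≠ y - ε) (h2 : x₀ ≠ y + ε) :
    HasDerivAt (fun x => 2 * max 0 (|y - x| - ε))
      (if y + ε < x₀ then (2:ℝ) else if x₀ < y - ε then -2 else 0) x₀ := by
  rcases lt_trichotomy x₀ (y - ε) with hlt | heq | hgt
  · rw [if_neg (by linarith), if_pos hlt]
    have haff : HasDerivAt (fun x : ℝ => 2 * (y - x - ε)) (-2) x₀ := by
      simpa using (((hasDerivAt_id x₀).const_sub y).sub_const ε).const_mul 2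
    refine haff.congr_of_eventuallyEq ?_
    filter_upwards [Iio_mem_nhds hlt] with x hx
    rw [abs_of_pos (by simp only [Set.mem_Iio] at hx; linarith),
      max_eq_right (by simp only [Set.mem_Iio] at hx; linarith)]
  · exact absurd heq h1
  · rcases lt_trichotomy x₀ (y + ε) with hlt2 | heq2 | hgt2
    · rw [if_neg (by linarith), if_neg (by linarith)]
      have habs : |y - x₀| < ε := abs_lt.2 ⟨by linarith, by linarith⟩
      have hcont : ContinuousAt (fun x : ℝ => |y - x|) x₀ :=
        ((continuous_const.sub continuous_id).abs).continuousAt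
      have hev : ∀ᶠ x in nhds x₀, |y - x| < ε :=
        hcont.eventually_lt continuousAt_const habs
      refine (hasDerivAt_const x₀ (0:ℝ)).congr_of_eventuallyEq ?_
      filter_upwards [hev] with x hx
      rw [max_eq_left (by linarith), mul_zero]
    · exact absurd heq2 h2
    · rw [if_pos hgt2]
      have haff : HasDerivAt (fun x : ℝ => 2 * (x - y - ε)) 2 x₀ := by
        simpa using (((hasDerivAt_id x₀).sub_const y).sub_const ε).const_mul 2
      refine haff.congr_of_eventuallyEq ?_
      filter_upwards [Ioi_mem_nhds hgt2] with x hx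
      have hx' : (y:ℝ) + ε < x := hx
      rw [abs_of_neg (by linarith), max_eq_right (by linarith)]
      ring_nf

lemma integral_Ioi_gpdf (m ν c : ℝ) (hν : 0 < ν) :
    ∫ x in Set.Ioi c, gpdf m ν x = 1 - gcdf m ν c := by
  have h := integral_add_compl (measurableSet_Iic (a := c)) (integrable_gpdf m ν)
  rw [Set.compl_Iic] at h
  have hIic : ∫ x in Set.Iic c, gpdf m ν x = gcdf m ν c :=
    (setIntegral_congr_set (Iio_ae_eq_Iic)).symm
  rw [integral_gpdf m ν hν] at h
  linarith

lemma integral_deriv (y ε ν m : ℝ) (hε : 0 < ε) (hν : 0 < ν) :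
    ∫ t, (if y + ε < t then (2:ℝ) else if t < y - ε then -2 else 0) * gpdf m ν t
      = 2 * (1 - gcdf m ν (y + ε) - gcdf m ν (y - ε)) := by
  have hpt : ∀ t : ℝ, (if y + ε < t then (2:ℝ) else if t < y - ε then -2 else 0) * gpdf m ν t
      = Set.indicator (Set.Ioi (y + ε)) (fun x => 2 * gpdf m ν x) t
        + Set.indicator (Set.Iio (y - ε)) (fun x => (-2) * gpdf m ν x) t := by
    intro t
    by_cases ht1 : y + ε < t
    · have ht2 : ¬ t < y - ε := by linarith
      simp [Set.indicator_of_mem (Set.mem_Ioi.2 ht1), Set.indicator_of_notMem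
        (fun h => ht2 (Set.mem_Iio.1 h)), ht1, ht2]
    · by_cases ht2 : t < y - ε
      · simp [Set.indicator_of_notMem (fun h => ht1 (Set.mem_Ioi.1 h)),
          Set.indicator_of_mem (Set.mem_Iio.2 ht2), ht1, ht2]
      · simp [Set.indicator_of_notMem (fun h => ht1 (Set.mem_Ioi.1 h)),
          Set.indicator_of_notMem (fun h => ht2 (Set.mem_Iio.1 h)), ht1, ht2]
  rw [show (fun t => (if y + ε < t then (2:ℝ) else if t < y - ε then -2 else 0) * gpdf m ν t)
      = fun t => Set.indicator (Set.Ioi (y + ε)) (fun x => 2 * gpdf m ν x) t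
        + Set.indicator (Set.Iio (y - ε)) (fun x => (-2) * gpdf m ν x) t from funext hpt]
  rw [integral_add (((integrable_gpdf m ν).const_mul 2).indicator measurableSet_Ioi)
    (((integrable_gpdf m ν).const_mul (-2)).indicator measurableSet_Iio)]
  rw [integral_indicator measurableSet_Ioi, integral_indicator measurableSet_Iio,
    integral_const_mul, integral_const_mul, integral_Ioi_gpdf m ν (y + ε) hν]
  have : ∫ x in Set.Iio (y - ε), gpdf m ν x = gcdf m ν (y - ε) := rfl
  rw [this]
  ring

end SvrAux

open SvrAux in
theorem svr_Psi1 (y ε ν : ℝ) (hε : 0 < ε) (hν : 0 < ν) (m : ℝ) :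
    HasDerivAt (fun m' => ∫ η, 2 * max 0 (|y - η| - ε) * gpdf m' ν η)
      (2 * (1 - gcdf m ν (y + ε) - gcdf m ν (y - ε))) m := by
  set F : ℝ → ℝ → ℝ := fun m' t => 2 * max 0 (|y - (t + m')| - ε) * gpdf 0 ν t with hF
  set F' : ℝ → ℝ := fun t =>
    (if y + ε < t + m then (2:ℝ) else if t + m < y - ε then -2 else 0) * gpdf 0 ν t with hF'
  have hmeasF : ∀ m' : ℝ, AEStronglyMeasurable (F m') volume := by
    intro m'
    exact (Continuous.mul
      (continuous_const.mul
        (continuous_const.max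
          (((continuous_const.sub (continuous_id.add continuous_const)).abs).sub continuous_const)))
      (continuous_gpdf 0 ν)).aestronglyMeasurable
  have hbound_int : Integrable (fun t : ℝ => 2 * gpdf 0 ν t) :=
    (integrable_gpdf 0 ν).const_mul 2
  have hFm_int : Integrable (F m) volume := by
    have hdom : Integrable (fun t : ℝ => (2 * |y| + 2 * |m| + 2 * ε) * gpdf 0 ν t
        + 2 * (|t| * gpdf 0 ν t)) :=
      ((integrable_gpdf 0 ν).const_mul _).add ((integrable_abs_mul_gpdf ν hν).const_mul 2)
    refine hdom.mono' (hmeasF m) (Eventually.of_forall fun t => ?_)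
    have h0 : 0 ≤ F m t :=
      mul_nonneg (mul_nonneg (by norm_num) (le_max_left _ _)) (gpdf_nonneg 0 ν t)
    rw [Real.norm_eq_abs, abs_of_nonneg h0]
    have hmax : max 0 (|y - (t + m)| - ε) ≤ |y| + |t| + |m| + ε := by
      refine max_le (by positivity) ?_
      have := abs_sub (y) (t + m)
      have h1 : |y - (t + m)| ≤ |y| + |t + m| := abs_sub _ _
      have h2 : |t + m| ≤ |t| + |m| := abs_add_le _ _
      linarith
    have hg := gpdf_nonneg 0 ν t
    simp only [hF]
    nlinarith [mul_le_mul_of_nonneg_right hmax hg, abs_nonneg t, abs_nonneg y, abs_nonneg m, hε.le]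
  have hmeasF' : AEStronglyMeasurable F' volume := by
    refine (Measurable.mul ?_ ((continuous_gpdf 0 ν).measurable)).aestronglyMeasurable
    refine Measurable.ite (measurableSet_lt measurable_const (measurable_id.add_const m))
      measurable_const ?_
    exact Measurable.ite (measurableSet_lt (measurable_id.add_const m) measurable_const)
      measurable_const measurable_const
  have hlip : ∀ᵐ t : ℝ ∂volume, LipschitzOnWith (Real.nnabs (2 * gpdf 0 ν t))
      (fun m' => F m' t) (Metric.ball m 1) := by
    refine Eventually.of_forall fun t => ?_
    refine LipschitzOnWith.of_dist_le_mul fun a _ b _ => ?_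
    rw [Real.dist_eq, Real.dist_eq]
    have hcoe : ((Real.nnabs (2 * gpdf 0 ν t) : NNReal) : ℝ) = 2 * gpdf 0 ν t := by
      rw [Real.coe_nnabs, abs_of_nonneg (mul_nonneg zero_le_two (gpdf_nonneg 0 ν t))]
    rw [hcoe]
    have hll := loss_lip y ε (t + a) (t + b)
    have hab : (t + a) - (t + b) = a - b := by ring
    rw [hab] at hll
    have hexp : F a t - F b t
        = (2 * max 0 (|y - (t + a)| - ε) - 2 * max 0 (|y - (t + b)| - ε)) * gpdf 0 ν t := by
      simp only [hF]; ring
    rw [hexp, abs_mul, abs_of_nonneg (gpdf_nonneg 0 ν t)]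
    calc |2 * max 0 (|y - (t + a)| - ε) - 2 * max 0 (|y - (t + b)| - ε)| * gpdf 0 ν t
        ≤ (2 * |a - b|) * gpdf 0 ν t := mul_le_mul_of_nonneg_right hll (gpdf_nonneg 0 ν t)
      _ = 2 * gpdf 0 ν t * |a - b| := by ring
  have hdiff : ∀ᵐ t : ℝ ∂volume, HasDerivAt (fun m' => F m' t) (F' t) m := by
    have hn1 : ∀ᵐ t : ℝ ∂volume, t ≠ y - ε - m := by
      rw [ae_iff]
      simp only [not_not, Set.setOf_eq_eq_singleton]
      exact measure_singleton _
    have hn2 : ∀ᵐ t : ℝ ∂volume, t ≠ y + ε - m := by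
      rw [ae_iff]
      simp only [not_not, Set.setOf_eq_eq_singleton]
      exact measure_singleton _
    filter_upwards [hn1, hn2] with t ht1 ht2
    have h1 : t + m ≠ y - ε := fun h => ht1 (by linarith)
    have h2 : t + m ≠ y + ε := fun h => ht2 (by linarith)
    have hinner : HasDerivAt (fun m' : ℝ => t + m') 1 m := by
      simpa using (hasDerivAt_id m).const_add t
    have houter := loss_hasDerivAt hε h1 h2
    have hcomp := (houter.comp m hinner)
    simpa [hF, hF', mul_comm] using hcomp.mul_const (gpdf 0 ν t)
  have key := (hasDerivAt_integral_of_dominated_loc_of_lip (Metric.ball_mem_nhds m one_pos)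
    (Eventually.of_forall hmeasF) hFm_int hmeasF' hlip hbound_int hdiff).2
  have heq : (fun m' => ∫ η, 2 * max 0 (|y - η| - ε) * gpdf m' ν η)
      = fun m' => ∫ t, F m' t := by
    funext m'
    refine (integral_add_right_eq_self
      (fun η => 2 * max 0 (|y - η| - ε) * gpdf m' ν η) m').symm.trans ?_
    refine integral_congr_ae (Eventually.of_forall fun t => ?_)
    simp only [hF]
    rw [gpdf_shift m' ν (t + m'), add_sub_cancel_right]
  have hval : ∫ t, F' t = 2 * (1 - gcdf m ν (y + ε) - gcdf m ν (y - ε)) := by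
    have : (fun t => F' t) = fun t =>
        (fun x => (if y + ε < x then (2:ℝ) else if x < y - ε then -2 else 0) * gpdf m ν x)
          (t + m) := by
      funext t
      simp only [hF']
      rw [gpdf_shift m ν (t + m), add_sub_cancel_right]
    rw [this]
    exact (integral_add_right_eq_self
      (fun x => (if y + ε < x then (2:ℝ) else if x < y - ε then -2 else 0) * gpdf m ν x) m).trans
      (integral_deriv y ε ν m hε hν)
  rw [heq, ← hval]
  exact key
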